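/- The lattice correlation length function ξ(z) = √(z(1 − z²)) / |z² + 2z − 1| is strictly monotonically increasing on the interval (0, √2 − 1). Consequently, the renormalization group transformation in the single-coupling truncation of the 2d Ising model, which is generated by solving the renormalization prescription a_m ξ(z_m) = ξ_phys, is invertible. -/
import Mathlib


/-- The lattice correlation length of the 2d Ising model as a function of
`z = tanh(β)`: `ξ(z) = √(z(1 − z²)) / |z² + 2z − 1|`. -/
noncomputable def isingCorrLength (z : ℝ) : ℝ :=
  Real.sqrt (z * (1 - z ^ 2)) / |z ^ 2 + 2 * z - 1|

/-- The lattice correlation length `ξ(z)` is strictly monotonically increasing on the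
subcritical interval `(0, √2 − 1)`; consequently the renormalization group
transformation in the single-coupling truncation is invertible. -/
theorem isingCorrLength_strictMonoOn :
    StrictMonoOn isingCorrLength (Set.Ioo 0 (Real.sqrt 2 - 1)) := by
  intro x hx y hy hxy
  obtain ⟨hx0, hx1⟩ := hx
  obtain ⟨hy0, hy1⟩ := hy
  have h2 : Real.sqrt 2 ^ 2 = 2 := Real.sq_sqrt (by norm_num)
  have hs2 : Real.sqrt 2 < 1.5 := by nlinarith [Real.sqrt_nonneg 2]
  have hy2 : y < 0.5 := by linarith
  have hx2 : x < 0.5 := by linarith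
  have hxneg : x ^ 2 + 2 * x - 1 < 0 := by nlinarith [Real.sqrt_nonneg 2]
  have hyneg : y ^ 2 + 2 * y - 1 < 0 := by nlinarith [Real.sqrt_nonneg 2]
  have hsum : x ^ 2 + x * y + y ^ 2 < 1 := by nlinarith
  have hnum : x * (1 - x ^ 2) < y * (1 - y ^ 2) := by
    nlinarith [mul_pos (sub_pos.mpr hxy) (sub_pos.mpr hsum)]
  unfold isingCorrLength
  rw [abs_of_neg hxneg, abs_of_neg hyneg]
  apply div_lt_div₀ (Real.sqrt_lt_sqrt (by nlinarith) hnum)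
  · nlinarith
  · exact Real.sqrt_nonneg _
  · linarith
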